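/- Let (X,T) be a topological dynamical system, ℰ an energy, 𝒰 a finite open cover, and {α_l}_{l≥1} a sequence of finite Borel partitions of X each refining 𝒰. Then for every n ≥ 1 there exists a finite set B_n ⊆ X such that (a) for each 1 ≤ l ≤ n, every atom of (α_l)_0^{n-1} = ⋁_{i=0}^{n-1}T^{-i}α_l contains at most one point of B_n, and (b) ∑_{x∈B_n} e^{nℰ(Δ_x^n)} ≥ (1/(2n)) · p_n(T,ℰ;𝒰). -/

import Mathlib

open MeasureTheory Filter Set
open scoped ENNReal NNReal Classical

set_option linter.unusedSectionVars false

variable {X : Type*} [MetricSpace X] [CompactSpace X] [MeasurableSpace X] [BorelSpace X]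

/-- The empirical measure `Δ_x^n = (1/n) ∑_{i<n} δ_{T^i x}` as a `Measure`. -/
noncomputable def empMeas (T : X → X) (n : ℕ) (x : X) : Measure X :=
  (n : ℝ≥0∞)⁻¹ • ∑ i ∈ Finset.range n, Measure.dirac (T^[i] x)

theorem empMeas_prob (T : X → X) {n : ℕ} (hn : n ≠ 0) (x : X) :
    IsProbabilityMeasure (empMeas T n x) := by
  constructor
  simp only [empMeas, Measure.smul_apply, smul_eq_mul, Measure.finset_sum_apply,
    measure_univ, Finset.sum_const, Finset.card_range, nsmul_eq_mul, mul_one]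
  exact ENNReal.inv_mul_cancel (by exact_mod_cast hn) (by simp)

/-- The empirical measure as a probability measure (junk value `δ_x` for `n = 0`). -/
noncomputable def empPM (T : X → X) (n : ℕ) (x : X) : ProbabilityMeasure X :=
  if hn : n = 0 then ⟨Measure.dirac x, inferInstance⟩
  else ⟨empMeas T n x, empMeas_prob T hn x⟩

/-- The weight `e^{n ℰ(Δ_x^n)}`. -/
noncomputable def wt (T : X → X) (ℰ : ProbabilityMeasure X → ℝ) (n : ℕ) (x : X) : ℝ :=
  Real.exp (n * ℰ (empPM T n x))

/-- Kantorovich–Rubinstein (Wasserstein-1) distance. -/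
noncomputable def Wass (μ ν : Measure X) : ℝ :=
  sSup {r | ∃ g : X → ℝ, LipschitzWith 1 g ∧ r = (∫ x, g x ∂μ) - ∫ x, g x ∂ν}

/-- The dynamical join `𝒰_0^{n-1} = ⋁_{i=0}^{n-1} T^{-i} 𝒰`. -/
noncomputable def joinF (T : X → X) (𝒰 : Finset (Set X)) (n : ℕ) : Finset (Set X) :=
  (Fintype.piFinset fun _ : Fin n => 𝒰).image fun u => ⋂ i : Fin n, T^[(i : ℕ)] ⁻¹' u i

def IsBorelCover (𝒱 : Finset (Set X)) : Prop :=
  (∀ V ∈ 𝒱, MeasurableSet V) ∧ ⋃₀ (𝒱 : Set (Set X)) = univ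

def IsOpenCover (𝒰 : Finset (Set X)) : Prop :=
  (∀ U ∈ 𝒰, IsOpen U) ∧ ⋃₀ (𝒰 : Set (Set X)) = univ

/-- `𝒱` refines `𝒲`: every element of `𝒱` is contained in some element of `𝒲`. -/
def Refines (𝒱 𝒲 : Finset (Set X)) : Prop := ∀ V ∈ 𝒱, ∃ W ∈ 𝒲, V ⊆ W

def IsPartitionF (α : Finset (Set X)) : Prop :=
  (∀ A ∈ α, MeasurableSet A) ∧ ⋃₀ (α : Set (Set X)) = univ ∧
    ∀ A ∈ α, ∀ B ∈ α, A ≠ B → Disjoint A B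

noncomputable def p1 (T : X → X) (ℰ : ProbabilityMeasure X → ℝ) (𝒰 : Finset (Set X)) (n : ℕ) : ℝ :=
  sInf {r | ∃ 𝒱 : Finset (Set X), IsBorelCover 𝒱 ∧ Refines 𝒱 (joinF T 𝒰 n) ∧
    r = ∑ V ∈ 𝒱, sSup (wt T ℰ n '' V)}

noncomputable def p2 (T : X → X) (ℰ : ProbabilityMeasure X → ℝ) (𝒰 : Finset (Set X)) (n : ℕ) : ℝ :=
  sInf {r | ∃ 𝒱 : Finset (Set X), IsBorelCover 𝒱 ∧ Refines 𝒱 (joinF T 𝒰 n) ∧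
    r = ∑ V ∈ 𝒱, sInf (wt T ℰ n '' V)}

noncomputable def p3 (T : X → X) (ℰ : ProbabilityMeasure X → ℝ) (𝒰 : Finset (Set X)) (n : ℕ) : ℝ :=
  sInf {r | ∃ β : Finset (Set X), β ⊆ joinF T 𝒰 n ∧ ⋃₀ (β : Set (Set X)) = univ ∧
    r = ∑ B ∈ β, sSup (wt T ℰ n '' B)}

noncomputable def p4 (T : X → X) (ℰ : ProbabilityMeasure X → ℝ) (𝒰 : Finset (Set X)) (n : ℕ) : ℝ :=
  sInf {r | ∃ β : Finset (Set X), β ⊆ joinF T 𝒰 n ∧ ⋃₀ (β : Set (Set X)) = univ ∧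
    r = ∑ B ∈ β, sInf (wt T ℰ n '' B)}

/-- `E` is an `(n,ε)`-separated set. -/
def IsSeparated (T : X → X) (n : ℕ) (ε : ℝ) (E : Finset X) : Prop :=
  ∀ x ∈ E, ∀ y ∈ E, x ≠ y → ∃ i < n, ε ≤ dist (T^[i] x) (T^[i] y)

/-- `F` is an `(n,ε)`-spanning set. -/
def IsSpanning (T : X → X) (n : ℕ) (ε : ℝ) (F : Finset X) : Prop :=
  ∀ x : X, ∃ y ∈ F, ∀ i < n, dist (T^[i] x) (T^[i] y) < ε

noncomputable def Pn (T : X → X) (ℰ : ProbabilityMeasure X → ℝ) (n : ℕ) (ε : ℝ) : ℝ :=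
  sSup {r | ∃ E : Finset X, IsSeparated T n ε E ∧ r = ∑ x ∈ E, wt T ℰ n x}

noncomputable def Qn (T : X → X) (ℰ : ProbabilityMeasure X → ℝ) (n : ℕ) (ε : ℝ) : ℝ :=
  sInf {r | ∃ F : Finset X, IsSpanning T n ε F ∧ r = ∑ x ∈ F, wt T ℰ n x}

/-- `τ_ε`, modulus of continuity of the energy w.r.t. the Wasserstein distance. -/
noncomputable def tauE (ℰ : ProbabilityMeasure X → ℝ) (ε : ℝ) : ℝ :=
  sSup {r | ∃ μ ν : ProbabilityMeasure X, Wass (μ : Measure X) (ν : Measure X) ≤ ε ∧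
    r = |ℰ μ - ℰ ν|}

/-- Shannon entropy of a finite collection of sets. -/
noncomputable def entF (μ : Measure X) (α : Finset (Set X)) : ℝ :=
  ∑ A ∈ α, Real.negMulLog (μ A).toReal

/-- `H_μ(𝒰)`: infimum of entropies of partitions refining `𝒰`. -/
noncomputable def Hcov (μ : Measure X) (𝒰 : Finset (Set X)) : ℝ :=
  sInf {r | ∃ α : Finset (Set X), IsPartitionF α ∧ Refines α 𝒰 ∧ r = entF μ α}

/-- Local measure-theoretic entropy `h_μ(T,𝒰)`. -/
noncomputable def hcov (T : X → X) (μ : Measure X) (𝒰 : Finset (Set X)) : ℝ :=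
  Filter.atTop.limsup fun n => Hcov μ (joinF T 𝒰 n) / n



/-! ### Auxiliary machinery for the greedy construction -/

open scoped BoundedContinuousFunction

section GreedyAux

variable {T : X → X} {ℰ : ProbabilityMeasure X → ℝ} {n : ℕ}

lemma wt_pos (T : X → X) (ℰ : ProbabilityMeasure X → ℝ) (n : ℕ) (x : X) :
    0 < wt T ℰ n x := Real.exp_pos _

lemma sSup_wt_nonneg (T : X → X) (ℰ : ProbabilityMeasure X → ℝ) (n : ℕ) (S : Set X) :
    0 ≤ sSup (wt T ℰ n '' S) := by
  rcases S.eq_empty_or_nonempty with rfl | hS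
  · simp [Real.sSup_empty]
  by_cases hb : BddAbove (wt T ℰ n '' S)
  · obtain ⟨y, hy⟩ := hS
    exact le_trans (wt_pos T ℰ n y).le (le_csSup hb ⟨y, hy, rfl⟩)
  · rw [Real.sSup_of_not_bddAbove hb]

/-- Lintegral of a bounded continuous `ℝ≥0`-valued function against the empirical measure. -/
lemma lintegral_empPM (T : X → X) {n : ℕ} (hn : n ≠ 0) (f : X →ᵇ ℝ≥0) (y : X) :
    ∫⁻ ω, (f ω : ℝ≥0∞) ∂((empPM T n y : Measure X))
      = (n : ℝ≥0∞)⁻¹ * ∑ i ∈ Finset.range n, (f (T^[i] y) : ℝ≥0∞) := by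
  have : ((empPM T n y : Measure X)) = empMeas T n y := congrArg (fun μ : ProbabilityMeasure X => (μ : Measure X)) (dif_neg hn : empPM T n y = ⟨empMeas T n y, empMeas_prob T hn y⟩)
  rw [this, empMeas, lintegral_smul_measure, lintegral_finset_sum_measure]
  congr 1
  refine Finset.sum_congr rfl fun i _ => ?_
  exact lintegral_dirac' _ (measurable_coe_nnreal_ennreal.comp f.continuous.measurable)

lemma continuous_empPM (T : X → X) (hT : Continuous T) {n : ℕ} (hn : n ≠ 0) :
    Continuous (fun x => empPM T n x) := by
  rw [continuous_iff_continuousAt]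
  intro x
  rw [ContinuousAt, ProbabilityMeasure.tendsto_iff_forall_lintegral_tendsto]
  intro f
  simp only [lintegral_empPM T hn f]
  have hc : Continuous fun y : X =>
      (n : ℝ≥0∞)⁻¹ * ∑ i ∈ Finset.range n, (f (T^[i] y) : ℝ≥0∞) := by
    refine (ENNReal.continuous_const_mul ?_).comp ?_
    · exact ENNReal.inv_ne_top.2 (by exact_mod_cast hn)
    · exact continuous_finset_sum _ fun i _ =>
        ENNReal.continuous_coe.comp (f.continuous.comp (hT.iterate i))
  exact hc.tendsto x

lemma continuous_wt (T : X → X) (hT : Continuous T) (ℰ : ProbabilityMeasure X → ℝ)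
    (hE : Continuous ℰ) {n : ℕ} (hn : n ≠ 0) : Continuous (wt T ℰ n) := by
  unfold wt
  exact Real.continuous_exp.comp
    ((continuous_const.mul (hE.comp (continuous_empPM T hT hn))))

/-- A measurable piece of `α` containing `y` (junk value `univ` if none exists). -/
noncomputable def choosePiece (α : Finset (Set X)) (y : X) : Set X :=
  if h : ∃ A ∈ α, y ∈ A then h.choose else Set.univ

lemma choosePiece_spec {α : Finset (Set X)} (hc : ⋃₀ (α : Set (Set X)) = univ) (y : X) :
    choosePiece α y ∈ α ∧ y ∈ choosePiece α y := by
  have h : ∃ A ∈ α, y ∈ A := by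
    have hy : y ∈ ⋃₀ (α : Set (Set X)) := hc ▸ mem_univ y
    obtain ⟨A, hA, hyA⟩ := hy
    exact ⟨A, hA, hyA⟩
  rw [choosePiece, dif_pos h]
  exact ⟨h.choose_spec.1, h.choose_spec.2⟩

lemma choosePiece_measurable {α : Finset (Set X)} (hm : ∀ A ∈ α, MeasurableSet A) (y : X) :
    MeasurableSet (choosePiece α y) := by
  rw [choosePiece]
  split
  · next h => exact hm _ h.choose_spec.1
  · exact MeasurableSet.univ

/-- The atom of the dynamical join `⋁_{i<n} T^{-i} α` containing `x`. -/
noncomputable def atomOf (T : X → X) (n : ℕ) (α : Finset (Set X)) (x : X) : Set X :=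
  ⋂ i : Fin n, T^[(i : ℕ)] ⁻¹' choosePiece α (T^[(i : ℕ)] x)

lemma mem_atomOf {α : Finset (Set X)} (hc : ⋃₀ (α : Set (Set X)) = univ)
    (T : X → X) (n : ℕ) (x : X) : x ∈ atomOf T n α x :=
  mem_iInter.2 fun i => (choosePiece_spec hc _).2

lemma atomOf_mem_joinF {α : Finset (Set X)} (hc : ⋃₀ (α : Set (Set X)) = univ)
    (T : X → X) (n : ℕ) (x : X) : atomOf T n α x ∈ joinF T α n := by
  rw [joinF, Finset.mem_image]
  refine ⟨fun i => choosePiece α (T^[(i : ℕ)] x), ?_, rfl⟩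
  rw [Fintype.mem_piFinset]
  exact fun i => (choosePiece_spec hc _).1

lemma atomOf_measurable {α : Finset (Set X)} (hm : ∀ A ∈ α, MeasurableSet A)
    (T : X → X) (hT : Continuous T) (n : ℕ) (x : X) : MeasurableSet (atomOf T n α x) :=
  MeasurableSet.iInter fun i =>
    (hT.iterate (i : ℕ)).measurable (choosePiece_measurable hm _)

lemma joinF_disjoint {α : Finset (Set X)} (hpart : IsPartitionF α) (T : X → X) (n : ℕ)
    {A B : Set X} (hA : A ∈ joinF T α n) (hB : B ∈ joinF T α n) (hAB : A ≠ B) :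
    Disjoint A B := by
  rw [joinF, Finset.mem_image] at hA hB
  obtain ⟨u, hu, rfl⟩ := hA
  obtain ⟨v, hv, rfl⟩ := hB
  rw [Fintype.mem_piFinset] at hu hv
  have : ∃ i : Fin n, u i ≠ v i := by
    by_contra h
    push_neg at h
    exact hAB (by simp [funext h])
  obtain ⟨i, hi⟩ := this
  have hd : Disjoint (u i) (v i) := hpart.2.2 _ (hu i) _ (hv i) hi
  refine Set.disjoint_left.2 fun x hx hx' => ?_
  have h1 : x ∈ T^[(i : ℕ)] ⁻¹' u i := mem_iInter.1 hx i
  have h2 : x ∈ T^[(i : ℕ)] ⁻¹' v i := mem_iInter.1 hx' i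
  exact Set.disjoint_left.1 hd h1 h2

lemma eq_atomOf {α : Finset (Set X)} (hpart : IsPartitionF α) (T : X → X) (n : ℕ)
    {A : Set X} (hA : A ∈ joinF T α n) {x : X} (hx : x ∈ A) : A = atomOf T n α x := by
  by_contra hne
  exact Set.disjoint_left.1
    (joinF_disjoint hpart T n hA (atomOf_mem_joinF hpart.2.1 T n x) hne) hx
    (mem_atomOf hpart.2.1 T n x)

lemma joinF_refines {α 𝒰 : Finset (Set X)} (h : Refines α 𝒰) (T : X → X) (n : ℕ) :
    Refines (joinF T α n) (joinF T 𝒰 n) := by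
  intro A hA
  rw [joinF, Finset.mem_image] at hA
  obtain ⟨u, hu, rfl⟩ := hA
  rw [Fintype.mem_piFinset] at hu
  choose w hw hsub using fun i : Fin n => h (u i) (hu i)
  refine ⟨⋂ i : Fin n, T^[(i : ℕ)] ⁻¹' w i, ?_, ?_⟩
  · rw [joinF, Finset.mem_image]
    exact ⟨w, Fintype.mem_piFinset.2 hw, rfl⟩
  · exact Set.iInter_mono fun i => Set.preimage_mono (hsub i)

/-- A greedy point of `S`: its weight nearly (within factor `2`) dominates
the supremum of the weight over `S`. -/
noncomputable def greedyPt (T : X → X) (ℰ : ProbabilityMeasure X → ℝ) (n : ℕ)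
    (S : Set X) (h : S.Nonempty) : X :=
  if h2 : ∃ x ∈ S, sSup (wt T ℰ n '' S) ≤ 2 * wt T ℰ n x then h2.choose else h.choose

lemma greedyPt_mem (T : X → X) (ℰ : ProbabilityMeasure X → ℝ) (n : ℕ)
    (S : Set X) (h : S.Nonempty) : greedyPt T ℰ n S h ∈ S := by
  rw [greedyPt]
  split
  · next h2 => exact h2.choose_spec.1
  · exact h.choose_spec

lemma greedyPt_spec (T : X → X) (ℰ : ProbabilityMeasure X → ℝ) (n : ℕ)
    (S : Set X) (h : S.Nonempty) :
    sSup (wt T ℰ n '' S) ≤ 2 * wt T ℰ n (greedyPt T ℰ n S h) := by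
  have h2 : ∃ x ∈ S, sSup (wt T ℰ n '' S) ≤ 2 * wt T ℰ n x := by
    by_cases hb : BddAbove (wt T ℰ n '' S)
    · have hpos : 0 < sSup (wt T ℰ n '' S) :=
        lt_of_lt_of_le (wt_pos T ℰ n h.choose) (le_csSup hb ⟨h.choose, h.choose_spec, rfl⟩)
      obtain ⟨a, ⟨x, hx, rfl⟩, ha⟩ :=
        exists_lt_of_lt_csSup (h.image _) (half_lt_self hpos)
      exact ⟨x, hx, by linarith⟩
    · rw [Real.sSup_of_not_bddAbove hb]
      exact ⟨h.choose, h.choose_spec, by have := wt_pos T ℰ n h.choose; linarith⟩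
  rw [greedyPt, dif_pos h2]
  exact h2.choose_spec.2

/-- The remaining set after `k` steps of the greedy construction. -/
noncomputable def greedyRem (T : X → X) (ℰ : ProbabilityMeasure X → ℝ)
    (α : ℕ → Finset (Set X)) (n : ℕ) : ℕ → Set X
  | 0 => Set.univ
  | k + 1 =>
    if h : (greedyRem T ℰ α n k).Nonempty then
      greedyRem T ℰ α n k \
        ⋃ l ∈ Finset.Icc 1 n, atomOf T n (α l) (greedyPt T ℰ n (greedyRem T ℰ α n k) h)
    else ∅

/-- The point chosen at step `k` of the greedy construction. -/
noncomputable def greedyPts (T : X → X) (ℰ : ProbabilityMeasure X → ℝ)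
    (α : ℕ → Finset (Set X)) (n : ℕ) [Nonempty X] (k : ℕ) : X :=
  if h : (greedyRem T ℰ α n k).Nonempty then greedyPt T ℰ n (greedyRem T ℰ α n k) h
  else Classical.arbitrary X

lemma greedyRem_succ_of_nonempty (T : X → X) (ℰ : ProbabilityMeasure X → ℝ)
    (α : ℕ → Finset (Set X)) (n : ℕ) [Nonempty X] (k : ℕ)
    (h : (greedyRem T ℰ α n k).Nonempty) :
    greedyRem T ℰ α n (k + 1) =
      greedyRem T ℰ α n k \
        ⋃ l ∈ Finset.Icc 1 n, atomOf T n (α l) (greedyPts T ℰ α n k) := by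
  rw [greedyRem, dif_pos h, greedyPts, dif_pos h]

lemma greedyRem_antitone (T : X → X) (ℰ : ProbabilityMeasure X → ℝ)
    (α : ℕ → Finset (Set X)) (n : ℕ) {i j : ℕ} (hij : i ≤ j) :
    greedyRem T ℰ α n j ⊆ greedyRem T ℰ α n i := by
  induction j with
  | zero => simp_all
  | succ k ih =>
    rcases Nat.lt_or_ge i (k+1) with hlt | hge
    · refine subset_trans ?_ (ih (Nat.lt_succ_iff.1 hlt))
      rw [greedyRem]
      split
      · exact Set.diff_subset
      · exact Set.empty_subset _
    · have : i = k + 1 := le_antisymm hij hge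
      subst this; rfl

lemma greedyPts_mem (T : X → X) (ℰ : ProbabilityMeasure X → ℝ)
    (α : ℕ → Finset (Set X)) (n : ℕ) [Nonempty X] {k : ℕ}
    (h : (greedyRem T ℰ α n k).Nonempty) :
    greedyPts T ℰ α n k ∈ greedyRem T ℰ α n k := by
  rw [greedyPts, dif_pos h]
  exact greedyPt_mem _ _ _ _ _

lemma greedyPts_spec (T : X → X) (ℰ : ProbabilityMeasure X → ℝ)
    (α : ℕ → Finset (Set X)) (n : ℕ) [Nonempty X] {k : ℕ}
    (h : (greedyRem T ℰ α n k).Nonempty) :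
    sSup (wt T ℰ n '' greedyRem T ℰ α n k) ≤ 2 * wt T ℰ n (greedyPts T ℰ α n k) := by
  rw [greedyPts, dif_pos h]
  exact greedyPt_spec _ _ _ _ _

lemma greedyRem_measurable (T : X → X) (hT : Continuous T) (ℰ : ProbabilityMeasure X → ℝ)
    (α : ℕ → Finset (Set X)) (hm : ∀ l ∈ Finset.Icc 1 n, ∀ A ∈ α l, MeasurableSet A)
    (k : ℕ) : MeasurableSet (greedyRem T ℰ α n k) := by
  induction k with
  | zero => exact MeasurableSet.univ
  | succ k ih =>
    rw [greedyRem]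
    split
    · refine ih.diff (Finset.measurableSet_biUnion _ fun l hl => ?_)
      exact atomOf_measurable (hm l hl) T hT n _
    · exact MeasurableSet.empty

lemma sum_image_le_real {ι β : Type*} [DecidableEq β] (s : Finset ι) (g : ι → β) (f : β → ℝ)
    (hf : ∀ b, 0 ≤ f b) : ∑ b ∈ s.image g, f b ≤ ∑ i ∈ s, f (g i) := by
  classical
  induction s using Finset.induction with
  | empty => simp
  | @insert a s ha ih =>
    rw [Finset.image_insert, Finset.sum_insert ha]
    by_cases hmem : g a ∈ s.image g
    · rw [Finset.insert_eq_self.2 hmem]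
      have := hf (g a)
      linarith
    · rw [Finset.sum_insert hmem]
      linarith

end GreedyAux

/-- greedy selection of points, one per atom of each `(α_l)_0^{n-1}`,
carrying at least `1/(2n)` of `p_n(T,ℰ;𝒰)`. -/
theorem exists_greedy_set (T : X → X) (hT : Continuous T)
    (ℰ : ProbabilityMeasure X → ℝ) (hE : Continuous ℰ)
    (𝒰 : Finset (Set X)) (h𝒰 : IsOpenCover 𝒰)
    (α : ℕ → Finset (Set X))
    (hα : ∀ l : ℕ, 1 ≤ l → IsPartitionF (α l) ∧ Refines (α l) 𝒰)
    (n : ℕ) (hn : 1 ≤ n) :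
    ∃ B : Finset X,
      (∀ l : ℕ, 1 ≤ l → l ≤ n → ∀ A ∈ joinF T (α l) n, ((B : Set X) ∩ A).Subsingleton) ∧
      (1 / (2 * n) : ℝ) * p1 T ℰ 𝒰 n ≤ ∑ x ∈ B, wt T ℰ n x := by

  classical
  have hn0 : n ≠ 0 := by omega
  by_cases hX : Nonempty X
  swap
  · -- X is empty
    have hXe : IsEmpty X := not_nonempty_iff.mp hX
    refine ⟨∅, by simp, ?_⟩
    have h0mem : (0 : ℝ) ∈ {r | ∃ 𝒱 : Finset (Set X), IsBorelCover 𝒱 ∧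
        Refines 𝒱 (joinF T 𝒰 n) ∧ r = ∑ V ∈ 𝒱, sSup (wt T ℰ n '' V)} := by
      refine ⟨∅, ⟨by simp, ?_⟩, by simp [Refines], by simp⟩
      simp [Set.eq_empty_of_isEmpty (Set.univ : Set X)]
    have hlb : ∀ r ∈ {r | ∃ 𝒱 : Finset (Set X), IsBorelCover 𝒱 ∧
        Refines 𝒱 (joinF T 𝒰 n) ∧ r = ∑ V ∈ 𝒱, sSup (wt T ℰ n '' V)}, (0:ℝ) ≤ r := by
      rintro r ⟨𝒱, -, -, rfl⟩
      exact Finset.sum_nonneg fun V _ => sSup_wt_nonneg T ℰ n V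
    have hle : p1 T ℰ 𝒰 n ≤ 0 := by
      rw [p1]; exact csInf_le ⟨0, hlb⟩ h0mem
    have hge : 0 ≤ p1 T ℰ 𝒰 n := by
      rw [p1]; exact le_csInf ⟨0, h0mem⟩ hlb
    have : p1 T ℰ 𝒰 n = 0 := le_antisymm hle hge
    simp [this]
  -- main case: X nonempty
  haveI : Nonempty X := hX
  have h1n : (1 : ℕ) ∈ Finset.Icc 1 n := by simp [hn]
  have hαl : ∀ l ∈ Finset.Icc 1 n, IsPartitionF (α l) := by
    intro l hl; exact (hα l (Finset.mem_Icc.1 hl).1).1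
  have hαr : ∀ l ∈ Finset.Icc 1 n, Refines (α l) 𝒰 := by
    intro l hl; exact (hα l (Finset.mem_Icc.1 hl).1).2
  -- boundedness of the weight function
  have hwtc : Continuous (wt T ℰ n) := continuous_wt T hT ℰ hE hn0
  obtain ⟨z, -, hz⟩ := isCompact_univ.exists_isMaxOn univ_nonempty hwtc.continuousOn
  have hbdd : ∀ S : Set X, BddAbove (wt T ℰ n '' S) := by
    intro S
    exact ⟨wt T ℰ n z, by rintro a ⟨y, -, rfl⟩; exact hz (Set.mem_univ y)⟩
  -- basic facts about the greedy construction
  have hstep : ∀ k, (greedyRem T ℰ α n k).Nonempty → ∀ l ∈ Finset.Icc 1 n,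
      ∀ y ∈ greedyRem T ℰ α n (k+1), y ∉ atomOf T n (α l) (greedyPts T ℰ α n k) := by
    intro k h l hl y hy hy'
    rw [greedyRem_succ_of_nonempty T ℰ α n k h] at hy
    exact hy.2 (Set.mem_biUnion hl hy')
  set K : ℕ := (joinF T (α 1) n).card + 1 with hK
  have hkey : ∀ i j : ℕ, i < j → (greedyRem T ℰ α n j).Nonempty →
      ∀ l ∈ Finset.Icc 1 n, greedyPts T ℰ α n j ∉ atomOf T n (α l) (greedyPts T ℰ α n i) := by
    intro i j hij hj l hl
    have hi : (greedyRem T ℰ α n i).Nonempty :=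
      hj.mono (greedyRem_antitone T ℰ α n hij.le)
    have hmem : greedyPts T ℰ α n j ∈ greedyRem T ℰ α n (i+1) :=
      greedyRem_antitone T ℰ α n hij (greedyPts_mem T ℰ α n hj)
    exact hstep i hi l hl _ hmem
  have hptatom : ∀ k, ∀ l ∈ Finset.Icc 1 n,
      greedyPts T ℰ α n k ∈ atomOf T n (α l) (greedyPts T ℰ α n k) := by
    intro k l hl
    exact mem_atomOf (hαl l hl).2.1 T n _
  -- the remaining set is empty after K steps
  have hRK : greedyRem T ℰ α n K = ∅ := by
    by_contra hne
    have hne' : ∀ k ≤ K, (greedyRem T ℰ α n k).Nonempty := by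
      intro k hk
      exact (Set.nonempty_iff_ne_empty.2 hne).mono (greedyRem_antitone T ℰ α n hk)
    have hinj : Set.InjOn (fun k => atomOf T n (α 1) (greedyPts T ℰ α n k))
        ((Finset.range K : Finset ℕ) : Set ℕ) := by
      have H : ∀ i j : ℕ, i < j → j < K →
          atomOf T n (α 1) (greedyPts T ℰ α n i) ≠ atomOf T n (α 1) (greedyPts T ℰ α n j) := by
        intro i j hij hjK habs
        have h1 := hkey i j hij (hne' j hjK.le) 1 h1n
        have h2 := hptatom j 1 h1n
        rw [← habs] at h2
        exact h1 h2
      intro i hi j hj hij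
      simp only [Finset.coe_range, Set.mem_Iio] at hi hj
      rcases lt_trichotomy i j with h | h | h
      · exact absurd hij (H i j h hj)
      · exact h
      · exact absurd hij.symm (H j i h hi)
    have hmaps : ∀ k ∈ Finset.range K,
        atomOf T n (α 1) (greedyPts T ℰ α n k) ∈ joinF T (α 1) n := by
      intro k _
      exact atomOf_mem_joinF (hαl 1 h1n).2.1 T n _
    have hcard := Finset.card_le_card_of_injOn _ hmaps hinj
    rw [Finset.card_range] at hcard
    omega
  -- the cover transition indices
  have hcover : ∀ x : X, ∃ k < K, x ∈ greedyRem T ℰ α n k ∧ x ∉ greedyRem T ℰ α n (k+1) := by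
    intro x
    by_contra hcon
    push_neg at hcon
    have : ∀ k ≤ K, x ∈ greedyRem T ℰ α n k := by
      intro k hk
      induction k with
      | zero => exact Set.mem_univ x
      | succ m ih => exact hcon m (by omega) (ih (by omega))
    have := this K le_rfl
    rw [hRK] at this
    exact this
  set s' : Finset ℕ := (Finset.range K).filter (fun k => (greedyRem T ℰ α n k).Nonempty)
    with hs'
  have hs'ne : ∀ k ∈ s', (greedyRem T ℰ α n k).Nonempty := by
    intro k hk; exact (Finset.mem_filter.1 hk).2
  have hptinj : Set.InjOn (greedyPts T ℰ α n) (s' : Set ℕ) := by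
    have H : ∀ i ∈ s', ∀ j ∈ s', i < j → greedyPts T ℰ α n i ≠ greedyPts T ℰ α n j := by
      intro i hi j hj hij habs
      have h1 := hkey i j hij (hs'ne j hj) 1 h1n
      exact h1 (by rw [← habs]; exact hptatom i 1 h1n)
    intro i hi j hj hij
    simp only [Finset.mem_coe] at hi hj
    rcases lt_trichotomy i j with h | h | h
    · exact absurd hij (H i hi j hj h)
    · exact h
    · exact absurd hij.symm (H j hj i hi h)
  refine ⟨s'.image (greedyPts T ℰ α n), ?_, ?_⟩
  · -- (a): at most one point per atom
    intro l hl1 hln A hA y hy z hz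
    have hlI : l ∈ Finset.Icc 1 n := Finset.mem_Icc.2 ⟨hl1, hln⟩
    obtain ⟨i, hi, rfl⟩ := Finset.mem_image.1 (Finset.mem_coe.1 hy.1)
    obtain ⟨j, hj, rfl⟩ := Finset.mem_image.1 (Finset.mem_coe.1 hz.1)
    have key : ∀ i ∈ s', ∀ j ∈ s', i < j →
        greedyPts T ℰ α n i ∈ A → greedyPts T ℰ α n j ∈ A → False := by
      intro i hi j hj hij hiA hjA
      have hAi : A = atomOf T n (α l) (greedyPts T ℰ α n i) :=
        eq_atomOf (hαl l hlI) T n hA hiA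
      rw [hAi] at hjA
      exact hkey i j hij (hs'ne j hj) l hlI hjA
    rcases lt_trichotomy i j with h | h | h
    · exact absurd (key i hi j hj h hy.2 hz.2) (fun f => f)
    · rw [h]
    · exact absurd (key j hj i hi h hz.2 hy.2) (fun f => f)
  · -- (b): the weight bound
    set g : ℕ × ℕ → Set X := fun p =>
      atomOf T n (α p.2) (greedyPts T ℰ α n p.1) ∩ greedyRem T ℰ α n p.1 with hg
    set 𝒱 : Finset (Set X) := (s' ×ˢ Finset.Icc 1 n).image g with h𝒱
    -- 𝒱 is a Borel cover refining joinF T 𝒰 n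
    have hmeas : ∀ V ∈ 𝒱, MeasurableSet V := by
      intro V hV
      obtain ⟨⟨k, l⟩, hkl, rfl⟩ := Finset.mem_image.1 hV
      rw [Finset.mem_product] at hkl
      refine (atomOf_measurable (hαl l hkl.2).1 T hT n _).inter ?_
      exact greedyRem_measurable T hT ℰ α (fun l hl => (hαl l hl).1) k
    have hcov𝒱 : ⋃₀ (𝒱 : Set (Set X)) = univ := by
      apply Set.eq_univ_of_forall
      intro x
      obtain ⟨k, hkK, hxk, hxk1⟩ := hcover x
      have hkne : (greedyRem T ℰ α n k).Nonempty := ⟨x, hxk⟩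
      have hks' : k ∈ s' := Finset.mem_filter.2 ⟨Finset.mem_range.2 hkK, hkne⟩
      have hxU : x ∈ ⋃ l ∈ Finset.Icc 1 n, atomOf T n (α l) (greedyPts T ℰ α n k) := by
        by_contra hxU
        exact hxk1 (by
          rw [greedyRem_succ_of_nonempty T ℰ α n k hkne]
          exact ⟨hxk, hxU⟩)
      obtain ⟨l, hl, hxl⟩ := Set.mem_iUnion₂.1 hxU
      refine ⟨g (k, l), ?_, hxl, hxk⟩
      exact Finset.mem_coe.2 (Finset.mem_image.2 ⟨(k, l), Finset.mem_product.2 ⟨hks', hl⟩, rfl⟩)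
    have href : Refines 𝒱 (joinF T 𝒰 n) := by
      intro V hV
      obtain ⟨⟨k, l⟩, hkl, rfl⟩ := Finset.mem_image.1 hV
      rw [Finset.mem_product] at hkl
      obtain ⟨W, hW, hsub⟩ := joinF_refines (hαr l hkl.2) T n _
        (atomOf_mem_joinF (hαl l hkl.2).2.1 T n (greedyPts T ℰ α n k))
      exact ⟨W, hW, Set.inter_subset_left.trans hsub⟩
    -- p1 is at most the weight of this cover
    have hlb : ∀ r ∈ {r | ∃ 𝒱 : Finset (Set X), IsBorelCover 𝒱 ∧
        Refines 𝒱 (joinF T 𝒰 n) ∧ r = ∑ V ∈ 𝒱, sSup (wt T ℰ n '' V)}, (0:ℝ) ≤ r := by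
      rintro r ⟨𝒲, -, -, rfl⟩
      exact Finset.sum_nonneg fun V _ => sSup_wt_nonneg T ℰ n V
    have hp1le : p1 T ℰ 𝒰 n ≤ ∑ V ∈ 𝒱, sSup (wt T ℰ n '' V) := by
      rw [p1]
      exact csInf_le ⟨0, hlb⟩ ⟨𝒱, ⟨hmeas, hcov𝒱⟩, href, rfl⟩
    -- bound the weight of the cover by the greedy points
    have hterm : ∀ p ∈ s' ×ˢ Finset.Icc 1 n,
        sSup (wt T ℰ n '' g p) ≤ 2 * wt T ℰ n (greedyPts T ℰ α n p.1) := by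
      rintro ⟨k, l⟩ hkl
      rw [Finset.mem_product] at hkl
      have hkne := hs'ne k hkl.1
      rcases (wt T ℰ n '' g (k, l)).eq_empty_or_nonempty with he | hne
      · rw [he, Real.sSup_empty]
        have := wt_pos T ℰ n (greedyPts T ℰ α n k)
        linarith
      · refine csSup_le hne ?_
        rintro a ⟨y, hy, rfl⟩
        have hyR : y ∈ greedyRem T ℰ α n k := hy.2
        calc wt T ℰ n y ≤ sSup (wt T ℰ n '' greedyRem T ℰ α n k) :=
              le_csSup (hbdd _) ⟨y, hyR, rfl⟩
          _ ≤ 2 * wt T ℰ n (greedyPts T ℰ α n k) := greedyPts_spec T ℰ α n hkne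
    have hsum1 : ∑ V ∈ 𝒱, sSup (wt T ℰ n '' V)
        ≤ ∑ p ∈ s' ×ˢ Finset.Icc 1 n, sSup (wt T ℰ n '' g p) :=
      sum_image_le_real _ _ _ (fun V => sSup_wt_nonneg T ℰ n V)
    have hsum2 : ∑ p ∈ s' ×ˢ Finset.Icc 1 n, sSup (wt T ℰ n '' g p)
        ≤ ∑ p ∈ s' ×ˢ Finset.Icc 1 n, 2 * wt T ℰ n (greedyPts T ℰ α n p.1) :=
      Finset.sum_le_sum hterm
    have hsum3 : ∑ p ∈ s' ×ˢ Finset.Icc 1 n, 2 * wt T ℰ n (greedyPts T ℰ α n p.1)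
        = (2 * n) * ∑ k ∈ s', wt T ℰ n (greedyPts T ℰ α n k) := by
      rw [Finset.sum_product, Finset.mul_sum]
      refine Finset.sum_congr rfl fun k _ => ?_
      show ∑ _l ∈ Finset.Icc 1 n, 2 * wt T ℰ n (greedyPts T ℰ α n k) = _
      rw [Finset.sum_const, Nat.card_Icc]
      have hni : n + 1 - 1 = n := by omega
      rw [hni, nsmul_eq_mul]
      push_cast
      ring
    have hsum4 : ∑ k ∈ s', wt T ℰ n (greedyPts T ℰ α n k)
        = ∑ x ∈ s'.image (greedyPts T ℰ α n), wt T ℰ n x :=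
      (Finset.sum_image (fun i hi j hj h => hptinj hi hj h)).symm
    have hfinal : p1 T ℰ 𝒰 n ≤ (2 * n) * ∑ x ∈ s'.image (greedyPts T ℰ α n), wt T ℰ n x := by
      calc p1 T ℰ 𝒰 n ≤ _ := hp1le
        _ ≤ _ := hsum1
        _ ≤ _ := hsum2
        _ = _ := hsum3
        _ = _ := by rw [hsum4]
    have h2n : (0:ℝ) < 2 * n := by positivity
    have : (1 / (2 * n) : ℝ) * p1 T ℰ 𝒰 n
        ≤ (1 / (2 * n) : ℝ) * ((2 * n) * ∑ x ∈ s'.image (greedyPts T ℰ α n), wt T ℰ n x) :=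
      mul_le_mul_of_nonneg_left hfinal (by positivity)
    calc (1 / (2 * n) : ℝ) * p1 T ℰ 𝒰 n ≤ _ := this
      _ = ∑ x ∈ s'.image (greedyPts T ℰ α n), wt T ℰ n x := by
          field_simp
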